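/- Let a, b ∈ ℝ, c > 0, ρ > 0 and |x| < 1 with x > 0. Then Bateman's fractional integral formula holds: ₂F₁(a,b; c+ρ; x) = (Γ(c+ρ)/(Γ(c)Γ(ρ))) · x^{1-c-ρ} ∫_0^x t^{c-1} (x-t)^{ρ-1} ₂F₁(a,b;c;t) dt. -/

import Mathlib

open scoped BigOperators
open intervalIntegral

/-- The Pochhammer symbol (rising factorial) `(x)_k = ∏_{r=0}^{k-1} (x+r)`. -/
noncomputable def poch (x : ℝ) (k : ℕ) : ℝ := ∏ r ∈ Finset.range k, (x + r)

/-- The Gauss hypergeometric series `₂F₁(a,b;c;z) = Σ_{k≥0} (a)_k(b)_k/((c)_k k!) z^k`. -/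
noncomputable def hyp2F1 (a b c z : ℝ) : ℝ :=
  ∑' k : ℕ, (poch a k * poch b k) / (poch c k * (k.factorial : ℝ)) * z ^ k

section Aux

open MeasureTheory Filter Topology

lemma poch_succ (x : ℝ) (k : ℕ) : poch x (k + 1) = poch x k * (x + k) :=
  Finset.prod_range_succ _ _

lemma poch_pos {x : ℝ} (hx : 0 < x) (k : ℕ) : 0 < poch x k :=
  Finset.prod_pos fun r _ => by positivity

lemma abs_poch_le (x : ℝ) (k : ℕ) : |poch x k| ≤ poch (|x| + 1) k := by
  rw [poch, poch, Finset.abs_prod]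
  refine Finset.prod_le_prod (fun r _ => abs_nonneg _) fun r _ => ?_
  calc |x + (r : ℝ)| ≤ |x| + |(r : ℝ)| := abs_add_le _ _
    _ ≤ |x| + 1 + r := by
        rw [abs_of_nonneg (by positivity : (0:ℝ) ≤ (r:ℝ))]; linarith

lemma Gamma_poch {s : ℝ} (hs : 0 < s) (k : ℕ) :
    Real.Gamma (s + k) = poch s k * Real.Gamma s := by
  induction k with
  | zero => simp [poch]
  | succ n ih =>
      have h : s + ((n + 1 : ℕ) : ℝ) = (s + n) + 1 := by push_cast; ring
      rw [h, Real.Gamma_add_one (by positivity), ih, poch_succ]; ring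

lemma tendsto_ratio_aux (α β : ℝ) (hβ : 0 < β) :
    Tendsto (fun n : ℕ => ((n : ℝ) + α) / ((n : ℝ) + β)) atTop (𝓝 1) := by
  have h1 : Tendsto (fun n : ℕ => ((n : ℝ) + β)) atTop atTop :=
    tendsto_atTop_add_const_right _ β tendsto_natCast_atTop_atTop
  have h2 : Tendsto (fun n : ℕ => (α - β) / ((n : ℝ) + β)) atTop (𝓝 0) :=
    Tendsto.div_atTop tendsto_const_nhds h1
  have h3 : Tendsto (fun n : ℕ => 1 + (α - β) / ((n : ℝ) + β)) atTop (𝓝 (1 + 0)) :=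
    tendsto_const_nhds.add h2
  rw [add_zero] at h3
  refine h3.congr fun n => ?_
  have hne : ((n : ℝ) + β) ≠ 0 := by positivity
  field_simp
  ring

lemma summable_maj {a b c y : ℝ} (hc : 0 < c) (hy0 : 0 < y) (hy1 : y < 1) :
    Summable (fun k : ℕ =>
      poch (|a| + 1) k * poch (|b| + 1) k / (poch c k * (k.factorial : ℝ)) * y ^ k) := by
  set f : ℕ → ℝ := fun k =>
    poch (|a| + 1) k * poch (|b| + 1) k / (poch c k * (k.factorial : ℝ)) * y ^ k with hf
  have ha' : (0:ℝ) < |a| + 1 := by positivity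
  have hb' : (0:ℝ) < |b| + 1 := by positivity
  have hfpos : ∀ k, 0 < f k := fun k => by
    have := poch_pos ha' k; have := poch_pos hb' k; have := poch_pos hc k
    have : (0:ℝ) < (Nat.factorial k : ℝ) := by positivity
    positivity
  refine summable_of_ratio_test_tendsto_lt_one hy1
    (Eventually.of_forall fun k => (hfpos k).ne') ?_
  have hratio : ∀ k : ℕ, ‖f (k + 1)‖ / ‖f k‖ =
      (((k : ℝ) + (|a| + 1)) / ((k : ℝ) + 1)) * ((((k : ℝ) + (|b| + 1))) / ((k : ℝ) + c)) * y := by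
    intro k
    rw [Real.norm_of_nonneg (hfpos _).le, Real.norm_of_nonneg (hfpos _).le, hf]
    simp only [poch_succ, Nat.factorial_succ, pow_succ]
    have h1 := (poch_pos ha' k).ne'
    have h2 := (poch_pos hb' k).ne'
    have h3 := (poch_pos hc k).ne'
    have h4 : (Nat.factorial k : ℝ) ≠ 0 := by positivity
    have h5 : ((k:ℝ) + 1) ≠ 0 := by positivity
    have h6 : ((k:ℝ) + c) ≠ 0 := by positivity
    have h7 : y ≠ 0 := hy0.ne'
    push_cast
    field_simp
    ring
  rw [show 𝓝 y = 𝓝 (1 * 1 * y) by rw [one_mul, one_mul]]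
  refine Tendsto.congr (fun k => (hratio k).symm) ?_
  exact ((tendsto_ratio_aux (|a| + 1) 1 one_pos).mul
    (tendsto_ratio_aux (|b| + 1) c hc)).mul tendsto_const_nhds

lemma beta_intervalIntegrable {p q x : ℝ} (hp : -1 < p) (hq : -1 < q) (hx : 0 < x) :
    IntervalIntegrable (fun t : ℝ => t ^ p * (x - t) ^ q) volume 0 x := by
  have hx2 : (0:ℝ) ≤ x / 2 := by linarith
  have hx2' : x / 2 ≤ x := by linarith
  have left : IntervalIntegrable (fun t : ℝ => t ^ p * (x - t) ^ q) volume 0 (x / 2) := by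
    refine IntervalIntegrable.mul_continuousOn (intervalIntegrable_rpow' hp) ?_
    apply ContinuousOn.rpow_const ((continuous_const.sub continuous_id).continuousOn)
    intro t ht
    rw [Set.uIcc_of_le hx2] at ht
    exact Or.inl (by intro h; simp only [Pi.sub_apply, id_eq] at h; nlinarith [ht.2])
  have A : IntervalIntegrable (fun v : ℝ => v ^ q) volume 0 (x / 2) :=
    intervalIntegrable_rpow' hq
  have B := A.comp_sub_left x
  rw [sub_zero, show x - x / 2 = x / 2 by ring] at B
  have right : IntervalIntegrable (fun t : ℝ => (x - t) ^ q * t ^ p) volume (x / 2) x := by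
    refine IntervalIntegrable.mul_continuousOn B.symm ?_
    apply ContinuousOn.rpow_const continuousOn_id
    intro t ht
    rw [Set.uIcc_of_le hx2'] at ht
    exact Or.inl (by simp only [id]; intro h; nlinarith [ht.1])
  have right' : IntervalIntegrable (fun t : ℝ => t ^ p * (x - t) ^ q) volume (x / 2) x := by
    simpa [mul_comm] using right
  exact left.trans right'

lemma beta_integral_scaled {s t x : ℝ} (hs : 0 < s) (ht : 0 < t) (hx : 0 < x) :
    ∫ u in (0:ℝ)..x, u ^ (s - 1) * (x - u) ^ (t - 1) =
      x ^ (s + t - 1) * (Real.Gamma s * Real.Gamma t / Real.Gamma (s + t)) := by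
  have key := Complex.betaIntegral_scaled (s : ℂ) (t : ℂ) hx
  have hgam := Complex.Gamma_mul_Gamma_eq_betaIntegral
    (s := (s : ℂ)) (t := (t : ℂ)) (by simpa using hs) (by simpa using ht)
  have hst : (0:ℝ) < Real.Gamma (s + t) := Real.Gamma_pos_of_pos (by linarith)
  have hGst : Complex.Gamma ((s : ℂ) + t) ≠ 0 := by
    rw [show ((s:ℂ) + t) = ((s + t : ℝ) : ℂ) by push_cast; ring, Complex.Gamma_ofReal]
    exact_mod_cast hst.ne'
  have hbeta : Complex.betaIntegral s t =
      Complex.Gamma s * Complex.Gamma t / Complex.Gamma ((s:ℂ) + t) := by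
    rw [hgam]
    field_simp
  have hLHS : (∫ u in (0:ℝ)..x, (u : ℂ) ^ ((s:ℂ) - 1) * ((x : ℂ) - u) ^ ((t:ℂ) - 1)) =
      ((∫ u in (0:ℝ)..x, u ^ (s - 1) * (x - u) ^ (t - 1) : ℝ) : ℂ) := by
    rw [← intervalIntegral.integral_ofReal]
    rw [intervalIntegral.integral_of_le hx.le, intervalIntegral.integral_of_le hx.le]
    refine MeasureTheory.setIntegral_congr_fun measurableSet_Ioc fun u hu => ?_
    rw [Complex.ofReal_mul, Complex.ofReal_cpow hu.1.le,
      Complex.ofReal_cpow (by linarith [hu.2] : (0:ℝ) ≤ x - u)]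
    push_cast
    ring
  rw [hLHS, hbeta] at key
  have hRHS : ((x : ℂ) ^ ((s:ℂ) + t - 1)) = ((x ^ (s + t - 1) : ℝ) : ℂ) := by
    rw [Complex.ofReal_cpow hx.le]; push_cast; ring_nf
  rw [hRHS] at key
  have final : ((∫ u in (0:ℝ)..x, u ^ (s - 1) * (x - u) ^ (t - 1) : ℝ) : ℂ) =
      ((x ^ (s + t - 1) * (Real.Gamma s * Real.Gamma t / Real.Gamma (s + t)) : ℝ) : ℂ) := by
    rw [key]
    push_cast [Complex.Gamma_ofReal]
    rw [show ((s:ℂ) + t) = ((s + t : ℝ) : ℂ) by push_cast; ring, Complex.Gamma_ofReal]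
  exact_mod_cast final

end Aux

open MeasureTheory

/-- Bateman's fractional integral formula: for `a, b ∈ ℝ`, `c > 0`, `ρ > 0`
and `0 < x < 1`,
`₂F₁(a,b;c+ρ;x) = (Γ(c+ρ)/(Γ(c)Γ(ρ))) x^{1-c-ρ} ∫_0^x t^{c-1}(x-t)^{ρ-1} ₂F₁(a,b;c;t) dt`. -/
theorem bateman_fractional_integral (a b c ρ x : ℝ) (hc : 0 < c) (hρ : 0 < ρ)
    (hx0 : 0 < x) (hx1 : x < 1) :
    hyp2F1 a b (c + ρ) x =
      Real.Gamma (c + ρ) / (Real.Gamma c * Real.Gamma ρ) * x ^ (1 - c - ρ) *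
        ∫ t in (0 : ℝ)..x, t ^ (c - 1) * (x - t) ^ (ρ - 1) * hyp2F1 a b c t := by
  set A : ℕ → ℝ := fun k => poch a k * poch b k / (poch c k * (k.factorial : ℝ)) with hA
  set g : ℕ → ℝ → ℝ :=
    fun k t => A k * t ^ k * (t ^ (c - 1) * (x - t) ^ (ρ - 1)) with hg
  set M : ℕ → ℝ := fun k =>
    poch (|a| + 1) k * poch (|b| + 1) k / (poch c k * (k.factorial : ℝ)) * x ^ k with hM
  have hMsum : Summable M := summable_maj hc hx0 hx1
  have hAle : ∀ k, |A k| ≤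
      poch (|a| + 1) k * poch (|b| + 1) k / (poch c k * (k.factorial : ℝ)) := by
    intro k
    have hden : (0:ℝ) < poch c k * (k.factorial : ℝ) := by
      have := poch_pos hc k
      have : (0:ℝ) < (k.factorial : ℝ) := by positivity
      have := poch_pos hc k
      positivity
    rw [hA]
    rw [abs_div, abs_of_pos hden]
    refine (div_le_div_iff_of_pos_right hden).mpr ?_
    rw [abs_mul]
    exact mul_le_mul (abs_poch_le a k) (abs_poch_le b k) (abs_nonneg _)
      ((abs_nonneg _).trans (abs_poch_le a k))
  -- integrability of each term
  have hx0' : (0:ℝ) ≤ x := hx0.le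
  have hbase : ∀ k : ℕ, IntervalIntegrable
      (fun t : ℝ => t ^ (c + (k:ℝ) - 1) * (x - t) ^ (ρ - 1)) volume 0 x := by
    intro k
    have hk : (0:ℝ) ≤ (k:ℝ) := Nat.cast_nonneg k
    exact beta_intervalIntegrable (by linarith) (by linarith) hx0
  have h0int : IntegrableOn (fun t : ℝ => t ^ (c - 1) * (x - t) ^ (ρ - 1))
      (Set.Ioc 0 x) volume := by
    have := beta_intervalIntegrable (p := c - 1) (q := ρ - 1) (by linarith) (by linarith) hx0
    exact this.1
  have hInt : ∀ k : ℕ, IntegrableOn (g k) (Set.Ioc 0 x) volume := by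
    intro k
    have h1 : IntegrableOn
        (fun t : ℝ => A k * (t ^ (c + (k:ℝ) - 1) * (x - t) ^ (ρ - 1)))
        (Set.Ioc 0 x) volume := ((hbase k).1.const_mul (A k))
    refine h1.congr_fun (fun t ht => ?_) measurableSet_Ioc
    rw [hg]
    have hpow : t ^ (c + (k:ℝ) - 1) = t ^ k * t ^ (c - 1) := by
      rw [← Real.rpow_natCast t k, ← Real.rpow_add ht.1]
      congr 1; ring
    show A k * (t ^ (c + (k:ℝ) - 1) * (x - t) ^ (ρ - 1)) = A k * t ^ k * (t ^ (c - 1) * (x - t) ^ (ρ - 1))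
    rw [hpow]; ring
  -- nonnegativity of the beta-type weight
  have hw_nonneg : ∀ t ∈ Set.Ioc (0:ℝ) x, 0 ≤ t ^ (c - 1) * (x - t) ^ (ρ - 1) := by
    intro t ht
    have h1 : (0:ℝ) ≤ t := ht.1.le
    have h2 : (0:ℝ) ≤ x - t := by linarith [ht.2]
    positivity
  -- summability of the integrals of norms
  have hMnonneg : ∀ k, 0 ≤ M k := by
    intro k
    have h1 := poch_pos (show (0:ℝ) < |a| + 1 by positivity) k
    have h2 := poch_pos (show (0:ℝ) < |b| + 1 by positivity) k
    have h3 := poch_pos hc k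
    have h4 : (0:ℝ) < (k.factorial : ℝ) := by positivity
    rw [hM]
    positivity
  set C : ℝ := ∫ t in Set.Ioc (0:ℝ) x, t ^ (c - 1) * (x - t) ^ (ρ - 1) with hC
  have hC0 : 0 ≤ C := setIntegral_nonneg measurableSet_Ioc hw_nonneg
  have hnorm : Summable (fun k : ℕ => ∫ t in Set.Ioc (0:ℝ) x, ‖g k t‖) := by
    refine Summable.of_nonneg_of_le
      (fun k => integral_nonneg fun t => norm_nonneg _)
      (fun k => ?_) (hMsum.mul_right C)
    have hbnd : ∀ t ∈ Set.Ioc (0:ℝ) x, ‖g k t‖ ≤ M k * (t ^ (c - 1) * (x - t) ^ (ρ - 1)) := by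
      intro t ht
      have hw := hw_nonneg t ht
      have htk : (0:ℝ) ≤ t ^ k := pow_nonneg ht.1.le k
      rw [hg]
      simp only [Real.norm_eq_abs]
      rw [abs_mul, abs_mul, abs_of_nonneg htk, abs_of_nonneg hw]
      refine mul_le_mul_of_nonneg_right ?_ hw
      have h1 : |A k| * t ^ k ≤
          (poch (|a| + 1) k * poch (|b| + 1) k / (poch c k * (k.factorial : ℝ))) * x ^ k := by
        refine mul_le_mul (hAle k) (pow_le_pow_left₀ ht.1.le ht.2 k) htk
          ((abs_nonneg _).trans (hAle k))
      simpa [hM] using h1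
    calc (∫ t in Set.Ioc (0:ℝ) x, ‖g k t‖)
        ≤ ∫ t in Set.Ioc (0:ℝ) x, M k * (t ^ (c - 1) * (x - t) ^ (ρ - 1)) := by
          refine setIntegral_mono_on ((hInt k).norm) (h0int.const_mul (M k))
            measurableSet_Ioc hbnd
      _ = M k * C := by rw [hC, ← MeasureTheory.integral_const_mul]
  -- interchange of sum and integral
  have hswap := integral_tsum_of_summable_integral_norm
    (μ := volume.restrict (Set.Ioc (0:ℝ) x)) hInt hnorm
  -- evaluate each term via the scaled beta integral
  have heval : ∀ k : ℕ, (∫ t in Set.Ioc (0:ℝ) x, g k t) =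
      A k * (x ^ (c + (k:ℝ) + ρ - 1) *
        (Real.Gamma (c + (k:ℝ)) * Real.Gamma ρ / Real.Gamma (c + (k:ℝ) + ρ))) := by
    intro k
    have hcongr : (∫ t in Set.Ioc (0:ℝ) x, g k t) =
        ∫ t in Set.Ioc (0:ℝ) x, A k * (t ^ (c + (k:ℝ) - 1) * (x - t) ^ (ρ - 1)) := by
      refine setIntegral_congr_fun measurableSet_Ioc fun t ht => ?_
      rw [hg]
      have hpow : t ^ (c + (k:ℝ) - 1) = t ^ k * t ^ (c - 1) := by
        rw [← Real.rpow_natCast t k, ← Real.rpow_add ht.1]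
        congr 1; ring
      rw [hpow]; ring
    rw [hcongr, MeasureTheory.integral_const_mul, ← intervalIntegral.integral_of_le hx0.le]
    have hs : (0:ℝ) < c + (k:ℝ) := by positivity
    rw [beta_integral_scaled hs hρ hx0]
  -- pointwise expansion of the integrand as a series
  have hpt : ∀ t ∈ Set.Ioc (0:ℝ) x,
      t ^ (c - 1) * (x - t) ^ (ρ - 1) * hyp2F1 a b c t = ∑' k : ℕ, g k t := by
    intro t ht
    have : (∑' k : ℕ, g k t) =
        (∑' k : ℕ, A k * t ^ k) * (t ^ (c - 1) * (x - t) ^ (ρ - 1)) := by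
      simp only [hg]
      exact tsum_mul_right
    rw [this, mul_comm]
    congr 1
  have hint_eq : (∫ t in (0:ℝ)..x, t ^ (c - 1) * (x - t) ^ (ρ - 1) * hyp2F1 a b c t) =
      ∑' k : ℕ, A k * (x ^ (c + (k:ℝ) + ρ - 1) *
        (Real.Gamma (c + (k:ℝ)) * Real.Gamma ρ / Real.Gamma (c + (k:ℝ) + ρ))) := by
    rw [intervalIntegral.integral_of_le hx0.le]
    rw [setIntegral_congr_fun measurableSet_Ioc hpt]
    rw [← hswap]
    exact tsum_congr heval
  rw [hint_eq, ← tsum_mul_left]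
  simp only [hyp2F1]
  refine tsum_congr fun k => ?_
  have hΓc : (0:ℝ) < Real.Gamma c := Real.Gamma_pos_of_pos hc
  have hΓρ : (0:ℝ) < Real.Gamma ρ := Real.Gamma_pos_of_pos hρ
  have hΓcρ : (0:ℝ) < Real.Gamma (c + ρ) := Real.Gamma_pos_of_pos (by linarith)
  have hpc := poch_pos hc k
  have hpcρ := poch_pos (show (0:ℝ) < c + ρ by linarith) k
  have hfac : (0:ℝ) < (k.factorial : ℝ) := by positivity
  rw [hA]
  rw [show Real.Gamma (c + (k:ℝ)) = poch c k * Real.Gamma c from Gamma_poch hc k]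
  rw [show Real.Gamma (c + (k:ℝ) + ρ) = poch (c + ρ) k * Real.Gamma (c + ρ) from by
    rw [show c + (k:ℝ) + ρ = (c + ρ) + (k:ℝ) by ring]
    exact Gamma_poch (by linarith) k]
  have hX : x ^ (1 - c - ρ) * x ^ (c + (k:ℝ) + ρ - 1) = x ^ k := by
    rw [← Real.rpow_natCast x k, ← Real.rpow_add hx0]
    congr 1; ring
  rw [← hX]
  field_simp
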